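/- Let (P_n) be monic orthogonal polynomials for a positive-definite linear functional L on ℝ[X], with distinct real zeros x_{n,1},…,x_{n,n} of P_n. Let Q_n(x) = ∏_{k=1}^s (x−γ_{n,k})·∏_{k=s+1}^n (x−x_{n,k}) with |γ_{n,k} − x_{n,k}| < ε for 1 ≤ k ≤ s ≤ n−1. Then L[P_n · Q_n] = L[P_n²] and for each 0 ≤ i ≤ n−1 there is a constant ω_i (independent of ε, given the configuration) such that |L[P_i · Q_n]| ≤ ε·ω_i. In particular, as ε → 0 we have L[P_i · Q_n] → 0 for 0 ≤ i ≤ n−1. -/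

import Mathlib

open Polynomial Finset

private lemma tele_prod (a b : ℕ → Polynomial ℝ) (s : ℕ) :
    (∏ k ∈ Finset.range s, a k) - (∏ k ∈ Finset.range s, b k)
      = ∑ j ∈ Finset.range s,
          (∏ k ∈ Finset.range j, a k) * (a j - b j) * (∏ k ∈ Finset.Ico (j+1) s, b k) := by
  induction s with
  | zero => simp
  | succ s ih =>
    rw [Finset.prod_range_succ, Finset.prod_range_succ, Finset.sum_range_succ]
    have h1 : ∀ j ∈ Finset.range s,
        (∏ k ∈ Finset.range j, a k) * (a j - b j) * (∏ k ∈ Finset.Ico (j+1) (s+1), b k)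
          = (∏ k ∈ Finset.range j, a k) * (a j - b j) * (∏ k ∈ Finset.Ico (j+1) s, b k) * b s := by
      intro j hj
      rw [Finset.prod_Ico_succ_top (by simp at hj; omega)]
      ring
    rw [Finset.sum_congr rfl h1, ← Finset.sum_mul, ← ih]
    simp [Finset.Ico_self]
    ring

private lemma coeff_mul_X_sub_C_bound (p : Polynomial ℝ) (a : ℝ) (Bp : ℝ) (hBp : 0 ≤ Bp)
    (h : ∀ m, |p.coeff m| ≤ Bp) : ∀ m, |(p * (X - C a)).coeff m| ≤ Bp * (1 + |a|) := by
  intro m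
  have hco : (p * (X - C a)).coeff m = (p * X).coeff m - a * p.coeff m := by
    rw [mul_sub]
    simp [Polynomial.coeff_sub, mul_comm]
  rw [hco]
  have hx : |(p * X).coeff m| ≤ Bp := by
    cases m with
    | zero => simp [Polynomial.mul_coeff_zero, Polynomial.coeff_X_zero, hBp]
    | succ m => rw [Polynomial.coeff_mul_X]; exact h m
  calc |(p * X).coeff m - a * p.coeff m| ≤ |(p * X).coeff m| + |a * p.coeff m| := abs_sub _ _
    _ ≤ Bp + |a| * Bp := by
        refine add_le_add hx ?_
        rw [abs_mul]
        exact mul_le_mul_of_nonneg_left (h m) (abs_nonneg a)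
    _ = Bp * (1 + |a|) := by ring

private lemma coeff_prod_bound (ρ : ℕ → ℝ) (T : Finset ℕ) :
    ∀ (p : Polynomial ℝ) (Bp : ℝ), 0 ≤ Bp → (∀ m, |p.coeff m| ≤ Bp) →
      ∀ m, |(p * ∏ k ∈ T, (X - C (ρ k))).coeff m| ≤ Bp * ∏ k ∈ T, (1 + |ρ k|) := by
  induction T using Finset.induction_on with
  | empty => intro p Bp hBp h m; simpa using h m
  | insert _ _ ha =>
    rename_i a T ih
    intro p Bp hBp h m
    rw [Finset.prod_insert ha, Finset.prod_insert ha, ← mul_assoc, ← mul_assoc]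
    exact le_trans (ih (p * (X - C (ρ a))) (Bp * (1 + |ρ a|)) (by positivity)
      (coeff_mul_X_sub_C_bound p (ρ a) Bp hBp h) m) (le_of_eq (by ring))

theorem almost_orthogonality_of_perturbed_polynomial
    (L : Polynomial ℝ →ₗ[ℝ] ℝ)
    (hpos : ∀ p : Polynomial ℝ, p ≠ 0 → 0 < L (p ^ 2))
    (P : ℕ → Polynomial ℝ)
    (hmonic : ∀ k, (P k).Monic)
    (hdeg : ∀ k, (P k).natDegree = k)
    (horth : ∀ i j, i ≠ j → L (P i * P j) = 0)
    (n s : ℕ) (hs : 1 ≤ s) (hsn : s ≤ n - 1)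
    (x : ℕ → ℝ) (hinj : ∀ k < n, ∀ l < n, x k = x l → k = l)
    (hroots : P n = ∏ k ∈ Finset.range n, (X - Polynomial.C (x k))) :
    ∃ ε₀ > (0 : ℝ), ∃ ω : ℕ → ℝ,
      ∀ ε : ℝ, 0 < ε → ε < ε₀ → ∀ γ : ℕ → ℝ, (∀ k < s, |γ k - x k| < ε) →
        L (P n * ((∏ k ∈ Finset.range s, (X - Polynomial.C (γ k))) *
            ∏ k ∈ Finset.Ico s n, (X - Polynomial.C (x k)))) = L (P n ^ 2) ∧
        ∀ i < n,
          |L (P i * ((∏ k ∈ Finset.range s, (X - Polynomial.C (γ k))) *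
            ∏ k ∈ Finset.Ico s n, (X - Polynomial.C (x k))))| ≤ ε * ω i := by
  have hn2 : 2 ≤ n := by omega
  have hsn' : s ≤ n := by omega
  -- P n is orthogonal to every polynomial of degree < n
  have hP0 : P 0 = 1 := (hmonic 0).natDegree_eq_zero.mp (hdeg 0)
  have key : ∀ d (q : Polynomial ℝ), q.natDegree < n → q.natDegree ≤ d → L (P n * q) = 0 := by
    intro d
    induction d with
    | zero =>
      intro q hqn hq0
      rw [Polynomial.eq_C_of_natDegree_eq_zero (Nat.le_zero.mp hq0)]
      have : P n * C (q.coeff 0) = q.coeff 0 • (P n * P 0) := by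
        rw [hP0, Polynomial.smul_eq_C_mul]; ring
      rw [this, map_smul, horth n 0 (by omega), smul_zero]
    | succ d ih =>
      intro q hqn hqd
      set d' := q.natDegree with hd'
      set c := q.coeff d' with hc
      set r := q - C c * P d' with hr
      have hdr : r.natDegree < n ∧ r.natDegree ≤ d := by
        by_cases hz : r = 0
        · simp [hz]; omega
        have h1 : r.natDegree ≤ d' := by
          refine le_trans (Polynomial.natDegree_sub_le _ _) ?_
          simp only [max_le_iff]
          exact ⟨le_refl _, le_trans (Polynomial.natDegree_mul_le)
            (by simp [hdeg d'])⟩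
        have h2 : r.coeff d' = 0 := by
          simp only [hr, Polynomial.coeff_sub, Polynomial.coeff_C_mul]
          have : (P d').coeff d' = 1 := by
            have := (hmonic d').coeff_natDegree
            rwa [hdeg d'] at this
          rw [this]; ring
        have h3 : r.natDegree ≠ d' := by
          intro he
          apply hz
          have h2' : r.coeff r.natDegree = 0 := by rw [he]; exact h2
          exact Polynomial.leadingCoeff_eq_zero.mp h2'
        constructor
        · omega
        · omega
      have hLr : L (P n * r) = 0 := ih r hdr.1 hdr.2
      have hq : q = C c * P d' + r := by rw [hr]; ring
      rw [hq]
      have : P n * (C c * P d' + r) = c • (P n * P d') + P n * r := by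
        rw [Polynomial.smul_eq_C_mul]; ring
      rw [this, map_add, map_smul, horth n d' (by omega), hLr]
      simp
  -- expansion of L (P i * R) through coefficients
  have expand : ∀ (i : ℕ) (R : Polynomial ℝ), R.natDegree < n →
      L (P i * R) = ∑ m ∈ Finset.range n, R.coeff m * L (P i * X ^ m) := by
    intro i R hR
    conv_lhs => rw [R.as_sum_range' n hR]
    rw [Finset.mul_sum, map_sum]
    refine Finset.sum_congr rfl fun m _ => ?_
    have : P i * (monomial m) (R.coeff m) = R.coeff m • (P i * X ^ m) := by
      rw [Polynomial.smul_eq_C_mul, ← Polynomial.C_mul_X_pow_eq_monomial]; ring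
    rw [this, map_smul, smul_eq_mul]
  set M : ℝ := ∏ k ∈ Finset.range n, (2 + |x k|) with hM
  have hM0 : 0 ≤ M := Finset.prod_nonneg fun k _ => by positivity
  refine ⟨1, one_pos, fun i => s * (M * ∑ m ∈ Finset.range n, |L (P i * X ^ m)|),
    fun ε hε hε1 γ hγ => ?_⟩
  -- the key telescoping identity
  set A : Polynomial ℝ := ∏ k ∈ Finset.range s, (X - C (γ k)) with hA
  set B : Polynomial ℝ := ∏ k ∈ Finset.Ico s n, (X - C (x k)) with hB
  set R : ℕ → Polynomial ℝ := fun j =>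
    (∏ k ∈ Finset.range j, (X - C (γ k))) * ∏ k ∈ Finset.Ico (j+1) n, (X - C (x k)) with hRdef
  have hPn : P n = (∏ k ∈ Finset.range s, (X - C (x k))) * B := by
    rw [hroots, hB]
    exact (Finset.prod_range_mul_prod_Ico _ hsn').symm
  have hRn : ∀ j, j < s → (R j).natDegree < n := by
    intro j hj
    refine lt_of_le_of_lt (Polynomial.natDegree_mul_le) ?_
    have h1 : (∏ k ∈ Finset.range j, (X - C (γ k))).natDegree ≤ j := by
      refine le_trans (Polynomial.natDegree_prod_le _ _) ?_
      simp [Polynomial.natDegree_X_sub_C]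
    have h2 : (∏ k ∈ Finset.Ico (j+1) n, (X - C (x k))).natDegree ≤ n - (j+1) := by
      refine le_trans (Polynomial.natDegree_prod_le _ _) ?_
      simp [Polynomial.natDegree_X_sub_C]
    omega
  have htele : A * B - P n = ∑ j ∈ Finset.range s, C (x j - γ j) * R j := by
    have t := tele_prod (fun k => X - C (γ k)) (fun k => X - C (x k)) s
    beta_reduce at t
    rw [hPn, ← sub_mul, hA, t, Finset.sum_mul]
    refine Finset.sum_congr rfl fun j hj => ?_
    simp only [Finset.mem_range] at hj
    have : (X - C (γ j)) - (X - C (x j)) = C (x j - γ j) := by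
      rw [Polynomial.C_sub]; ring
    rw [this]
    simp only [hRdef]
    have hsplit : (∏ k ∈ Finset.Ico (j+1) s, (X - C (x k))) * B
        = ∏ k ∈ Finset.Ico (j+1) n, (X - C (x k)) := by
      rw [hB, Finset.prod_Ico_consecutive _ (by omega : j + 1 ≤ s) hsn']
    rw [← hsplit]
    ring
  have hQP : A * B = P n + ∑ j ∈ Finset.range s, C (x j - γ j) * R j := by
    rw [← htele]; ring
  constructor
  · -- first part
    rw [hQP, mul_add, map_add, Finset.mul_sum, map_sum, sq]
    have : ∀ j ∈ Finset.range s, L (P n * (C (x j - γ j) * R j)) = 0 := by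
      intro j hj
      simp only [Finset.mem_range] at hj
      have : P n * (C (x j - γ j) * R j) = P n * (C (x j - γ j) * R j) := rfl
      have hdeg' : (C (x j - γ j) * R j).natDegree < n :=
        lt_of_le_of_lt (le_trans Polynomial.natDegree_mul_le (by simp)) (hRn j hj)
      exact key n _ hdeg' (by omega)
    rw [Finset.sum_congr rfl this]
    simp
  · -- second part
    intro i hi
    rw [hQP, mul_add, map_add, Finset.mul_sum, map_sum]
    rw [horth i n (by omega), zero_add]
    have hterm : ∀ j ∈ Finset.range s,
        L (P i * (C (x j - γ j) * R j)) = (x j - γ j) * L (P i * R j) := by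
      intro j hj
      have : P i * (C (x j - γ j) * R j) = (x j - γ j) • (P i * R j) := by
        rw [Polynomial.smul_eq_C_mul]; ring
      rw [this, map_smul, smul_eq_mul]
    rw [Finset.sum_congr rfl hterm]
    -- bound on coefficients of R j
    have hcoeff : ∀ j, j < s → ∀ m, |(R j).coeff m| ≤ M := by
      intro j hj m
      have h1 : ∀ m, |((1 : Polynomial ℝ) * ∏ k ∈ Finset.range j, (X - C (γ k))).coeff m|
          ≤ 1 * ∏ k ∈ Finset.range j, (1 + |γ k|) := by
        refine coeff_prod_bound γ _ 1 1 zero_le_one (fun m => ?_)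
        rcases eq_or_ne m 0 with rfl | hm <;> simp [Polynomial.coeff_one, *]
      have h2 : ∀ m, |(R j).coeff m|
          ≤ (1 * ∏ k ∈ Finset.range j, (1 + |γ k|)) * ∏ k ∈ Finset.Ico (j+1) n, (1 + |x k|) := by
        intro m
        have := coeff_prod_bound x (Finset.Ico (j+1) n)
          ((1 : Polynomial ℝ) * ∏ k ∈ Finset.range j, (X - C (γ k)))
          (1 * ∏ k ∈ Finset.range j, (1 + |γ k|))
          (by positivity) h1 m
        simpa [hRdef] using this
      refine le_trans (h2 m) ?_
      have hγb : ∀ k ∈ Finset.range j, 1 + |γ k| ≤ 2 + |x k| := by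
        intro k hk
        simp only [Finset.mem_range] at hk
        have := hγ k (by omega)
        have : |γ k| ≤ |x k| + |γ k - x k| := by
          calc |γ k| = |x k + (γ k - x k)| := by ring_nf
            _ ≤ |x k| + |γ k - x k| := abs_add_le _ _
        have h3 := hγ k (by omega)
        nlinarith [abs_nonneg (γ k - x k)]
      have hb1 : ∏ k ∈ Finset.range j, (1 + |γ k|) ≤ ∏ k ∈ Finset.range j, (2 + |x k|) :=
        Finset.prod_le_prod (fun k _ => by positivity) hγb
      have hb2 : ∏ k ∈ Finset.Ico (j+1) n, (1 + |x k|) ≤ ∏ k ∈ Finset.Ico (j+1) n, (2 + |x k|) :=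
        Finset.prod_le_prod (fun k _ => by positivity) (fun k _ => by nlinarith [abs_nonneg (x k)])
      have hMsplit : M = (∏ k ∈ Finset.range j, (2 + |x k|)) * (2 + |x j|)
          * ∏ k ∈ Finset.Ico (j+1) n, (2 + |x k|) := by
        rw [hM, Finset.range_eq_Ico, ← Finset.prod_Ico_consecutive (fun k => 2 + |x k|)
          (Nat.zero_le (j+1)) (by omega : j + 1 ≤ n), ← Finset.range_eq_Ico,
          Finset.prod_range_succ]
      rw [one_mul, hMsplit]
      have p1 : (0:ℝ) ≤ ∏ k ∈ Finset.range j, (1 + |γ k|) :=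
        Finset.prod_nonneg fun k _ => by positivity
      have p2 : (0:ℝ) ≤ ∏ k ∈ Finset.Ico (j+1) n, (1 + |x k|) :=
        Finset.prod_nonneg fun k _ => by positivity
      have p3 : (0:ℝ) ≤ ∏ k ∈ Finset.range j, (2 + |x k|) :=
        Finset.prod_nonneg fun k _ => by positivity
      have p4 : (0:ℝ) ≤ ∏ k ∈ Finset.Ico (j+1) n, (2 + |x k|) :=
        Finset.prod_nonneg fun k _ => by positivity
      have hxj : (1:ℝ) ≤ 2 + |x j| := by nlinarith [abs_nonneg (x j)]
      nlinarith [mul_le_mul hb1 hb2 p2 p3]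
    -- bound each L (P i * R j)
    have hLR : ∀ j, j < s → |L (P i * R j)| ≤ M * ∑ m ∈ Finset.range n, |L (P i * X ^ m)| := by
      intro j hj
      rw [expand i (R j) (hRn j hj)]
      calc |∑ m ∈ Finset.range n, (R j).coeff m * L (P i * X ^ m)|
          ≤ ∑ m ∈ Finset.range n, |(R j).coeff m * L (P i * X ^ m)| :=
            Finset.abs_sum_le_sum_abs _ _
        _ ≤ ∑ m ∈ Finset.range n, M * |L (P i * X ^ m)| := by
            refine Finset.sum_le_sum fun m _ => ?_
            rw [abs_mul]
            exact mul_le_mul_of_nonneg_right (hcoeff j hj m) (abs_nonneg _)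
        _ = M * ∑ m ∈ Finset.range n, |L (P i * X ^ m)| := by rw [Finset.mul_sum]
    calc |∑ j ∈ Finset.range s, (x j - γ j) * L (P i * R j)|
        ≤ ∑ j ∈ Finset.range s, |(x j - γ j) * L (P i * R j)| :=
          Finset.abs_sum_le_sum_abs _ _
      _ ≤ ∑ j ∈ Finset.range s, ε * (M * ∑ m ∈ Finset.range n, |L (P i * X ^ m)|) := by
          refine Finset.sum_le_sum fun j hj => ?_
          simp only [Finset.mem_range] at hj
          rw [abs_mul]
          have h1 : |x j - γ j| ≤ ε := by
            have := hγ j (by omega)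
            rw [abs_sub_comm] at this
            linarith
          have h2 := hLR j hj
          have h3 : 0 ≤ |L (P i * R j)| := abs_nonneg _
          nlinarith
      _ = ε * (↑s * (M * ∑ m ∈ Finset.range n, |L (P i * X ^ m)|)) := by
          rw [Finset.sum_const, Finset.card_range, nsmul_eq_mul]; ring
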